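/- Let 0 ≤ t0 < T, Λ, e ∈ ℝ, and let g : [t0, T) → ℝ be continuous. Define Z : [t0, T) → ℝ by Z(t) = Λ + (T − t)·[(e − Λ)/(T − t0) + ∫_{t0}^t g(s)/(T − s) ds]. Then Z(t0) = e and, for every t ∈ [t0, T), Z is differentiable at t with Z'(t) = −(Z(t) − Λ)/(T − t) + g(t). If moreover ∫_{t0}^T |g(s)|/(T − s) ds < ∞, then Z(t) → Λ as t → T from the left. -/

import Mathlib

/-- Variation-of-constants formula for the bridge equation: with
`Z(t) = Λ + (T - t)·[(e - Λ)/(T - t0) + ∫_{t0}^t g(s)/(T - s) ds]`, one has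
`Z(t0) = e`, `Z'(t) = -(Z(t) - Λ)/(T - t) + g(t)` on `[t0, T)`, and if
`∫_{t0}^T |g(s)|/(T - s) ds < ∞` then `Z(t) → Λ` as `t → T⁻`. -/
theorem stmt_8 (t0 T Λ e : ℝ) (h0 : 0 ≤ t0) (hT : t0 < T)
    (g : ℝ → ℝ) (hg : ContinuousOn g (Set.Ico t0 T))
    (Z : ℝ → ℝ)
    (hZ : ∀ t, Z t = Λ + (T - t) * ((e - Λ) / (T - t0) + ∫ s in t0..t, g s / (T - s))) :
    Z t0 = e ∧
    (∀ t ∈ Set.Ico t0 T,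
      HasDerivWithinAt Z (-(Z t - Λ) / (T - t) + g t) (Set.Ico t0 T) t) ∧
    (MeasureTheory.IntegrableOn (fun s => |g s| / (T - s)) (Set.Ico t0 T) →
      Filter.Tendsto Z (nhdsWithin T (Set.Iio T)) (nhds Λ)) := by
  have hT0 : (0:ℝ) < T - t0 := by linarith
  set c : ℝ := (e - Λ) / (T - t0) with hc
  set φ : ℝ → ℝ := fun s => g s / (T - s) with hφ
  have hφcont : ContinuousOn φ (Set.Ico t0 T) := by
    apply hg.div (continuousOn_const.sub continuousOn_id)
    intro s hs
    exact sub_ne_zero.mpr (ne_of_gt hs.2)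
  have hZ0 : Z t0 = e := by
    rw [hZ, intervalIntegral.integral_same, hc]
    field_simp
    ring
  refine ⟨hZ0, ?_, ?_⟩
  · intro t ht
    have htT : t < T := ht.2
    have hne : T - t ≠ 0 := sub_ne_zero.mpr (ne_of_gt htT)
    have hsub : Set.uIcc t0 t ⊆ Set.Ico t0 T := by
      rw [Set.uIcc_of_le ht.1]
      exact Set.Icc_subset_Ico_right htT
    have hint : IntervalIntegrable φ MeasureTheory.volume t0 t :=
      (hφcont.mono hsub).intervalIntegrable
    have hIccIio : Set.Icc t0 T ∩ Set.Iio T = Set.Ico t0 T := by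
      ext x
      simp only [Set.mem_inter_iff, Set.mem_Icc, Set.mem_Iio, Set.mem_Ico]
      constructor
      · rintro ⟨⟨h1, _⟩, h2⟩; exact ⟨h1, h2⟩
      · rintro ⟨h1, h2⟩; exact ⟨⟨h1, h2.le⟩, h2⟩
    have hIcc_eq : nhdsWithin t (Set.Icc t0 T) = nhdsWithin t (Set.Ico t0 T) := by
      rw [nhdsWithin_restrict' _ (Iio_mem_nhds htT), hIccIio]
    have hmeas : StronglyMeasurableAtFilter φ (nhdsWithin t (Set.Icc t0 T)) := by
      rw [hIcc_eq]
      exact ⟨Set.Ico t0 T, self_mem_nhdsWithin, hφcont.aestronglyMeasurable measurableSet_Ico⟩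
    have hcont : ContinuousWithinAt φ (Set.Icc t0 T) t := by
      unfold ContinuousWithinAt
      rw [hIcc_eq]
      exact hφcont t ht
    haveI : Fact (t ∈ Set.Icc t0 T) := ⟨⟨ht.1, htT.le⟩⟩
    have hF : HasDerivWithinAt (fun u => ∫ s in t0..u, φ s) (φ t) (Set.Ico t0 T) t :=
      (intervalIntegral.integral_hasDerivWithinAt_right hint hmeas hcont).mono
        Set.Ico_subset_Icc_self
    have hmul : HasDerivWithinAt (fun u => Λ + (T - u) * (c + ∫ s in t0..u, φ s))
        ((-1) * (c + ∫ s in t0..t, φ s) + (T - t) * φ t) (Set.Ico t0 T) t := by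
      exact HasDerivWithinAt.const_add _
        ((((hasDerivWithinAt_id t _).const_sub T).mul (hF.const_add c)))
    have hZeq : Z = fun u => Λ + (T - u) * (c + ∫ s in t0..u, φ s) := funext hZ
    rw [hZeq]
    convert hmul using 1
    show -((Λ + (T - t) * (c + ∫ s in t0..t, φ s)) - Λ) / (T - t) + g t = _
    simp only [hφ]
    field_simp
    ring
  · intro hInt
    set ψ : ℝ → ℝ := fun s => |g s| / (T - s) with hψ
    set M : ℝ := ∫ s in Set.Ico t0 T, ψ s with hM
    have hbound : ∀ t ∈ Set.Ico t0 T, |∫ s in t0..t, φ s| ≤ M := by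
      intro t ht
      have h1 : |∫ s in t0..t, φ s| ≤ ∫ s in t0..t, |φ s| :=
        intervalIntegral.abs_integral_le_integral_abs ht.1
      have h2 : (∫ s in t0..t, |φ s|) = ∫ s in Set.Ioc t0 t, ψ s := by
        rw [intervalIntegral.integral_of_le ht.1]
        apply MeasureTheory.setIntegral_congr_fun measurableSet_Ioc
        intro s hs
        have hpos : (0:ℝ) < T - s := by
          have h1 := hs.2; have h2 := ht.2; linarith
        simp [hφ, hψ, abs_div, abs_of_pos hpos]
      have h3 : (∫ s in Set.Ioc t0 t, ψ s) ≤ M := by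
        apply MeasureTheory.setIntegral_mono_set hInt
        · filter_upwards [MeasureTheory.ae_restrict_mem measurableSet_Ico] with s hs
          have : (0:ℝ) < T - s := by linarith [hs.2]
          exact div_nonneg (abs_nonneg _) this.le
        · exact Filter.Eventually.of_forall fun s hs => ⟨hs.1.le, lt_of_le_of_lt hs.2 ht.2⟩
      linarith
    have hK : Filter.Tendsto (fun t => (T - t) * (|c| + M)) (nhdsWithin T (Set.Iio T)) (nhds 0) := by
      have : Filter.Tendsto (fun t : ℝ => (T - t) * (|c| + M)) (nhds T) (nhds ((T - T) * (|c| + M))) := by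
        exact ((continuous_const.sub continuous_id).mul continuous_const).tendsto T
      simpa using this.mono_left nhdsWithin_le_nhds
    have hsq : Filter.Tendsto (fun t => (T - t) * (c + ∫ s in t0..t, φ s))
        (nhdsWithin T (Set.Iio T)) (nhds 0) := by
      apply squeeze_zero_norm' _ hK
      filter_upwards [Ioo_mem_nhdsLT_of_mem (Set.mem_Ioc.mpr ⟨hT, le_refl T⟩)] with t ht
      have htm : t ∈ Set.Ico t0 T := ⟨ht.1.le, ht.2⟩
      have hTt : (0:ℝ) ≤ T - t := by linarith [ht.2]
      rw [Real.norm_eq_abs, abs_mul, abs_of_nonneg hTt]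
      apply mul_le_mul_of_nonneg_left _ hTt
      calc |c + ∫ s in t0..t, φ s| ≤ |c| + |∫ s in t0..t, φ s| := abs_add_le _ _
        _ ≤ |c| + M := by linarith [hbound t htm]
    have : Filter.Tendsto Z (nhdsWithin T (Set.Iio T)) (nhds (Λ + 0)) := by
      rw [funext hZ]
      exact tendsto_const_nhds.add hsq
    simpa using this
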